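/- Let (G, ℓ) be a small morphism-colored groupoid satisfying the inverse-color condition. If (f, g) and (f', g') are composable pairs of morphisms of G (i.e., target(g) = source(f) and target(g') = source(f')) such that ℓ(f) ∼¹ ℓ(f') and ℓ(g) ∼¹ ℓ(g'), then ℓ(f ∘ g) ∼¹ ℓ(f' ∘ g'). -/

import Mathlib

open CategoryTheory

universe v u

/-- The type of morphisms of a category, bundled with their endpoints. -/
abbrev Mor (C : Type u) [Category.{v} C] : Type (max u v) := Σ X Y : C, X ⟶ Y

/-- `(C, ℓ)` is a morphism-colored category: whenever `ℓ g = ℓ (f₂ ≫ f₁)`,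
the morphism `g` factors as `g₂ ≫ g₁` with matching colors. -/
def IsMCColoring {C : Type u} [Category.{v} C] {I : Type*} (ℓ : Mor C → I) : Prop :=
  ∀ {A B X Y Z : C} (g : A ⟶ B) (f₂ : X ⟶ Y) (f₁ : Y ⟶ Z),
    ℓ ⟨A, B, g⟩ = ℓ ⟨X, Z, f₂ ≫ f₁⟩ →
    ∃ (M : C) (g₂ : A ⟶ M) (g₁ : M ⟶ B),
      g = g₂ ≫ g₁ ∧ ℓ ⟨A, M, g₂⟩ = ℓ ⟨X, Y, f₂⟩ ∧ ℓ ⟨M, B, g₁⟩ = ℓ ⟨Y, Z, f₁⟩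

/-- The inverse-color condition on a morphism-colored groupoid. -/
def InvColorCond {G : Type u} [Groupoid.{v} G] {I : Type*} (ℓ : Mor G → I) : Prop :=
  ∀ {X Y X' Y' : G} (f : X ⟶ Y) (g : X' ⟶ Y'),
    ℓ ⟨X, Y, f⟩ = ℓ ⟨X', Y', g⟩ →
    ℓ ⟨Y, X, Groupoid.inv f⟩ = ℓ ⟨Y', X', Groupoid.inv g⟩

/-- A nonempty composable sequence of morphisms from `X` to `Y`. -/
inductive Chain (C : Type u) [Category.{v} C] : C → C → Type (max u v) where
  | single {X Y : C} (f : X ⟶ Y) : Chain C X Y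
  | cons {X Y Z : C} (f : X ⟶ Y) (rest : Chain C Y Z) : Chain C X Z

/-- The composite of a composable sequence of morphisms. -/
def Chain.comp {C : Type u} [Category.{v} C] : ∀ {X Y : C}, Chain C X Y → (X ⟶ Y)
  | _, _, .single f => f
  | _, _, .cons f rest => f ≫ rest.comp

/-- The list of colors of a composable sequence of morphisms. -/
def Chain.colors {C : Type u} [Category.{v} C] {I : Type*} (ℓ : Mor C → I) :
    ∀ {X Y : C}, Chain C X Y → List I
  | _, _, .single f => [ℓ ⟨_, _, f⟩]
  | _, _, .cons f rest => ℓ ⟨_, _, f⟩ :: rest.colors ℓ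

/-- The relation `∼¹` on colors: `a ∼¹ b` iff there are composable sequences
of morphisms, of the same length and with componentwise equal colors,
whose composites have colors `a` and `b` respectively. -/
def Sim1 {C : Type u} [Category.{v} C] {I : Type*} (ℓ : Mor C → I) (a b : I) : Prop :=
  ∃ (X Y X' Y' : C) (c : Chain C X Y) (c' : Chain C X' Y'),
    c.colors ℓ = c'.colors ℓ ∧ a = ℓ ⟨X, Y, c.comp⟩ ∧ b = ℓ ⟨X', Y', c'.comp⟩

/-- The color of the identity of an object. -/
def ell0 {C : Type u} [Category.{v} C] {I : Type*} (ℓ : Mor C → I) (x : C) : I :=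
  ℓ ⟨x, x, 𝟙 x⟩

/-- The relation `∼⁰` on identity colors. -/
def Sim0 {C : Type u} [Category.{v} C] {I : Type*} (ℓ : Mor C → I) (a b : I) : Prop :=
  ∃ (X Y X' Y' : C) (f : X ⟶ Y) (g : X' ⟶ Y'),
    Sim1 ℓ (ℓ ⟨X, Y, f⟩) (ℓ ⟨X', Y', g⟩) ∧ a = ell0 ℓ X ∧ b = ell0 ℓ X'

/-- A functor is color-constant if it sends morphisms of equal color to equal morphisms. -/
def ColorConstant {C : Type u} [Category.{v} C] {D : Type*} [Category D] {I : Type*}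
    (ℓ : Mor C → I) (F : C ⥤ D) : Prop :=
  ∀ {X Y X' Y' : C} (f : X ⟶ Y) (g : X' ⟶ Y'),
    ℓ ⟨X, Y, f⟩ = ℓ ⟨X', Y', g⟩ →
    (⟨F.obj X, F.obj Y, F.map f⟩ : Mor D) = ⟨F.obj X', F.obj Y', F.map g⟩

/-- Concatenation of chains. -/
def Chain.append {C : Type u} [Category.{v} C] :
    ∀ {X Y Z : C}, Chain C X Y → Chain C Y Z → Chain C X Z
  | _, _, _, .single f, d => .cons f d
  | _, _, _, .cons f rest, d => .cons f (rest.append d)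

theorem Chain.comp_append {C : Type u} [Category.{v} C] :
    ∀ {X Y Z : C} (c : Chain C X Y) (d : Chain C Y Z),
      (c.append d).comp = c.comp ≫ d.comp
  | _, _, _, .single f, d => rfl
  | _, _, _, .cons f rest, d => by
    simp [Chain.append, Chain.comp, Chain.comp_append rest d]

theorem Chain.colors_append {C : Type u} [Category.{v} C] {I : Type*} (ℓ : Mor C → I) :
    ∀ {X Y Z : C} (c : Chain C X Y) (d : Chain C Y Z),
      (c.append d).colors ℓ = c.colors ℓ ++ d.colors ℓ
  | _, _, _, .single f, d => rfl
  | _, _, _, .cons f rest, d => by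
    simp [Chain.append, Chain.colors, Chain.colors_append ℓ rest d]

/-- If a morphism has the same color as the composite of a chain, it factors as
a chain with the same color list. -/
theorem factor_chain {C : Type u} [Category.{v} C] {I : Type*} {ℓ : Mor C → I}
    (hℓ : IsMCColoring ℓ) :
    ∀ {X Y A B : C} (c : Chain C X Y) (f : A ⟶ B),
      ℓ ⟨A, B, f⟩ = ℓ ⟨X, Y, c.comp⟩ →
      ∃ d : Chain C A B, d.comp = f ∧ d.colors ℓ = c.colors ℓ
  | _, _, _, _, .single a, f, h => ⟨.single f, rfl, by simpa [Chain.colors, Chain.comp] using h⟩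
  | _, _, _, _, .cons a rest, f, h => by
    obtain ⟨M, g₂, g₁, hfac, h₂, h₁⟩ := hℓ f a rest.comp h
    obtain ⟨d, hdc, hcol⟩ := factor_chain hℓ rest g₁ h₁
    exact ⟨.cons g₂ d, by simp [Chain.comp, hdc, hfac],
      by simp [Chain.colors, hcol, h₂]⟩

/-- `∼¹` is compatible with composition: if `ℓ f ∼¹ ℓ f'` and
`ℓ g ∼¹ ℓ g'` for composable pairs `(f, g)` and `(f', g')`, then
`ℓ (f ∘ g) ∼¹ ℓ (f' ∘ g')`. -/
theorem stmt8 {G : Type u} [Groupoid.{v} G] {I : Type*} (ℓ : Mor G → I)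
    (hℓ : IsMCColoring ℓ) (hinv : InvColorCond ℓ)
    {X Y Z X' Y' Z' : G} (g : X ⟶ Y) (f : Y ⟶ Z) (g' : X' ⟶ Y') (f' : Y' ⟶ Z')
    (hf : Sim1 ℓ (ℓ ⟨Y, Z, f⟩) (ℓ ⟨Y', Z', f'⟩))
    (hg : Sim1 ℓ (ℓ ⟨X, Y, g⟩) (ℓ ⟨X', Y', g'⟩)) :
    Sim1 ℓ (ℓ ⟨X, Z, g ≫ f⟩) (ℓ ⟨X', Z', g' ≫ f'⟩) := by
  obtain ⟨_, _, _, _, cf, cf', hcf, hf1, hf2⟩ := hf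
  obtain ⟨_, _, _, _, cg, cg', hcg, hg1, hg2⟩ := hg
  obtain ⟨df, hdf, hdfc⟩ := factor_chain hℓ cf f hf1
  obtain ⟨df', hdf', hdfc'⟩ := factor_chain hℓ cf' f' hf2
  obtain ⟨dg, hdg, hdgc⟩ := factor_chain hℓ cg g hg1
  obtain ⟨dg', hdg', hdgc'⟩ := factor_chain hℓ cg' g' hg2
  refine ⟨X, Z, X', Z', dg.append df, dg'.append df', ?_, ?_, ?_⟩
  · rw [Chain.colors_append, Chain.colors_append, hdfc, hdgc, hdfc', hdgc', hcf, hcg]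
  · rw [Chain.comp_append, hdf, hdg]
  · rw [Chain.comp_append, hdf', hdg']
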